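/- Define u₁ = (1/2)(ε₁+ε₂+ε₃+ε₄), u₂ = (1/2)(-ε₁+ε₂+ε₃+ε₄), u₃ = ε₄ in ℝ⁴ (with standard orthonormal basis ε₁,...,ε₄), and let M be the lattice of vectors Σxᵢεᵢ with all xᵢ ∈ (1/2)ℤ and xᵢ - xⱼ ∈ ℤ for all i, j. Then the only unit vectors in M that are nonnegative linear combinations of the four vectors ε₁+ε₂+ε₃+ε₄, -ε₁+ε₂+ε₃+ε₄, ε₃+ε₄, ε₄ are exactly u₁, u₂, u₃. -/
import Mathlib


set_option maxHeartbeats 2000000 in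
/-- Lemma 3.8: the only unit vectors in the lattice `M ⊂ ℝ⁴` (vectors with all
coordinates in `(1/2)ℤ` and pairwise differences in `ℤ`) that are nonnegative linear
combinations of `ε₁+ε₂+ε₃+ε₄`, `-ε₁+ε₂+ε₃+ε₄`, `ε₃+ε₄`, `ε₄` are
`u₁ = (ε₁+ε₂+ε₃+ε₄)/2`, `u₂ = (-ε₁+ε₂+ε₃+ε₄)/2`, `u₃ = ε₄`. -/
theorem stmt10 (x : Fin 4 → ℝ)
    (hM1 : ∀ i, ∃ m : ℤ, x i = (m : ℝ) / 2)
    (hM2 : ∀ i j, ∃ m : ℤ, x i - x j = (m : ℝ))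
    (hcomb : ∃ c : Fin 4 → ℝ, (∀ i, 0 ≤ c i) ∧
      x = fun i => c 0 * (![1,1,1,1] : Fin 4 → ℝ) i + c 1 * (![-1,1,1,1] : Fin 4 → ℝ) i +
        c 2 * (![0,0,1,1] : Fin 4 → ℝ) i + c 3 * (![0,0,0,1] : Fin 4 → ℝ) i)
    (hunit : ∑ i, (x i)^2 = 1) :
    x = ![1/2, 1/2, 1/2, 1/2] ∨ x = ![-1/2, 1/2, 1/2, 1/2] ∨ x = ![0, 0, 0, 1] := by
  obtain ⟨c, hc, hx⟩ := hcomb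
  obtain ⟨n0, h0⟩ := hM1 0
  obtain ⟨n1, h1⟩ := hM1 1
  obtain ⟨n2, h2⟩ := hM1 2
  obtain ⟨n3, h3⟩ := hM1 3
  obtain ⟨m, hm⟩ := hM2 1 0
  have e0 : x 0 = c 0 - c 1 := by rw [hx]; simp; ring
  have e1 : x 1 = c 0 + c 1 := by rw [hx]; simp
  have e2 : x 2 = c 0 + c 1 + c 2 := by rw [hx]; simp
  have e3 : x 3 = c 0 + c 1 + c 2 + c 3 := by rw [hx]; simp
  have hsum : (x 0)^2 + (x 1)^2 + (x 2)^2 + (x 3)^2 = 1 := by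
    rw [← hunit]; simp [Fin.sum_univ_four]
  have hc0 := hc 0
  have hc1 := hc 1
  have hc2 := hc 2
  have hc3 := hc 3
  have key : n0*n0 + n1*n1 + n2*n2 + n3*n3 = 4 := by
    have : (n0*n0 + n1*n1 + n2*n2 + n3*n3 : ℝ) = 4 := by
      rw [h0, h1, h2, h3] at hsum; nlinarith [hsum]
    exact_mod_cast this
  have i1 : n0 ≤ n1 := by
    have : (n0 : ℝ) ≤ n1 := by
      have : x 0 ≤ x 1 := by rw [e0, e1]; linarith
      rw [h0, h1] at this; linarith
    exact_mod_cast this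
  have i2 : -n1 ≤ n0 := by
    have : (-n1 : ℝ) ≤ n0 := by
      have : -(x 1) ≤ x 0 := by rw [e0, e1]; linarith
      rw [h0, h1] at this; push_cast; linarith
    exact_mod_cast this
  have i3 : n1 ≤ n2 := by
    have : (n1 : ℝ) ≤ n2 := by
      have : x 1 ≤ x 2 := by rw [e1, e2]; linarith
      rw [h1, h2] at this; linarith
    exact_mod_cast this
  have i4 : n2 ≤ n3 := by
    have : (n2 : ℝ) ≤ n3 := by
      have : x 2 ≤ x 3 := by rw [e2, e3]; linarith
      rw [h2, h3] at this; linarith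
    exact_mod_cast this
  have ipar : n1 - n0 = 2 * m := by
    have : (n1 - n0 : ℝ) = 2 * m := by
      rw [h0, h1] at hm; push_cast; linarith
    exact_mod_cast this
  have b0l : -2 ≤ n0 := by nlinarith [sq_nonneg n1, sq_nonneg n2, sq_nonneg n3, sq_nonneg (n0+2)]
  have b0u : n0 ≤ 2 := by nlinarith [sq_nonneg n1, sq_nonneg n2, sq_nonneg n3, sq_nonneg (n0-2)]
  have b1l : -2 ≤ n1 := by nlinarith [sq_nonneg n0, sq_nonneg n2, sq_nonneg n3, sq_nonneg (n1+2)]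
  have b1u : n1 ≤ 2 := by nlinarith [sq_nonneg n0, sq_nonneg n2, sq_nonneg n3, sq_nonneg (n1-2)]
  have b2l : -2 ≤ n2 := by nlinarith [sq_nonneg n0, sq_nonneg n1, sq_nonneg n3, sq_nonneg (n2+2)]
  have b2u : n2 ≤ 2 := by nlinarith [sq_nonneg n0, sq_nonneg n1, sq_nonneg n3, sq_nonneg (n2-2)]
  have b3l : -2 ≤ n3 := by nlinarith [sq_nonneg n0, sq_nonneg n1, sq_nonneg n2, sq_nonneg (n3+2)]
  have b3u : n3 ≤ 2 := by nlinarith [sq_nonneg n0, sq_nonneg n1, sq_nonneg n2, sq_nonneg (n3-2)]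
  have hcases : (n0 = 1 ∧ n1 = 1 ∧ n2 = 1 ∧ n3 = 1) ∨
      (n0 = -1 ∧ n1 = 1 ∧ n2 = 1 ∧ n3 = 1) ∨
      (n0 = 0 ∧ n1 = 0 ∧ n2 = 0 ∧ n3 = 2) := by
    interval_cases n0 <;> interval_cases n1 <;> interval_cases n2 <;> interval_cases n3 <;> omega
  rcases hcases with ⟨a0, a1, a2, a3⟩ | ⟨a0, a1, a2, a3⟩ | ⟨a0, a1, a2, a3⟩
  · left
    funext i; fin_cases i <;> simp [h0, h1, h2, h3, a0, a1, a2, a3] <;> norm_num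
  · right; left
    funext i; fin_cases i <;> simp [h0, h1, h2, h3, a0, a1, a2, a3] <;> norm_num
  · right; right
    funext i; fin_cases i <;> simp [h0, h1, h2, h3, a0, a1, a2, a3] <;> norm_num
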